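/- Let p be a prime and α, β ∈ ℤ⁺. The nilpotency index of the augmentation ideal of the group ring (ℤ/p^βℤ)[ℤ/p^αℤ] equals (β(p−1)+1)·p^{α−1}. Equivalently, δ(ℤ/p^αℤ, ℤ/p^βℤ), the maximal functional degree of a map ℤ/p^αℤ → ℤ/p^βℤ, equals (β(p−1)+1)·p^{α−1} − 1. -/

import Mathlib

open Classical in
/-- Difference operator: `(Δ_a f)(x) = f (x + a) - f x`. -/
def fdiff {A B : Type*} [AddCommGroup A] [AddCommGroup B] (a : A) (f : A → B) : A → B :=
  fun x => f (x + a) - f x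

/-- `DegLE f n` means every `(n+1)`-fold difference of `f` vanishes, i.e. `fdeg f ≤ n`. -/
def DegLE {A B : Type*} [AddCommGroup A] [AddCommGroup B] (f : A → B) (n : ℕ) : Prop :=
  ∀ l : List A, l.length = n + 1 → l.foldr fdiff f = 0

open Classical in
/-- The functional degree of `f : A → B`, valued in `ℕ ∪ {-∞, ∞}`:
`fdeg 0 = ⊥ (= -∞)`; for nonzero `f`, it is the least `n` with all `(n+1)`-fold
differences of `f` vanishing, or `⊤ (= ∞)` if there is no such `n`. -/
noncomputable def fdeg {A B : Type*} [AddCommGroup A] [AddCommGroup B] (f : A → B) :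
    WithBot ℕ∞ :=
  if f = 0 then ⊥
  else if ∃ n : ℕ, DegLE f n then (((sInf {n : ℕ | DegLE f n} : ℕ) : ℕ∞) : WithBot ℕ∞)
  else ((⊤ : ℕ∞) : WithBot ℕ∞)

/-- The augmentation map of the group ring `R[A]`. -/
noncomputable def aug (R : Type*) [CommRing R] (A : Type*) [AddCommGroup A] :
    AddMonoidAlgebra R A →ₐ[R] R :=
  (AddMonoidAlgebra.lift R R A) 1

/-- The augmentation ideal of `R[A]`. -/
noncomputable def augIdeal (R : Type*) [CommRing R] (A : Type*) [AddCommGroup A] :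
    Ideal (AddMonoidAlgebra R A) :=
  RingHom.ker (aug R A).toRingHom

namespace CSAux
open AddMonoidAlgebra Finset

lemma ar1 (Q b k r : ℕ) (hr : r ≤ Q) (hj : (Q+1)*k + r ≤ b*(Q+1)) :
    b + ((Q+1)*k + r) ≤ b*(Q+1) + k := by
  rcases Nat.lt_or_ge k b with hk | hk
  · have hm : Q*(k+1) ≤ Q*b := Nat.mul_le_mul_left Q hk
    have e1 : Q*(k+1) = Q*k + Q := by ring
    have e2 : b*(Q+1) = b*Q + b := by ring
    have e3 : Q*b = b*Q := Nat.mul_comm _ _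
    have e4 : (Q+1)*k = Q*k + k := by ring
    linarith
  · linarith

lemma ar2 (Q b k r : ℕ) (hr : r ≤ Q + 1) (hj : (Q+2)*k + r + 2 ≤ b*(Q+2)) :
    b + (1 + ((Q+2)*k + r)) ≤ b*(Q+2) + k := by
  have e2 : b*(Q+2) = b*Q + 2*b := by ring
  have e4 : (Q+2)*k = Q*k + 2*k := by ring
  have hkb : k < b := by
    by_contra hh
    push_neg at hh
    have : (Q+2)*b ≤ (Q+2)*k := Nat.mul_le_mul_left _ hh
    have e5 : (Q+2)*b = b*(Q+2) := Nat.mul_comm _ _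
    linarith
  rcases Nat.lt_or_ge k (b-1) with hk | hk
  · have hk2 : k + 2 ≤ b := by omega
    have hm : (Q+1)*(k+2) ≤ (Q+1)*b := Nat.mul_le_mul_left _ hk2
    have e6 : (Q+1)*(k+2) = Q*k + 2*Q + k + 2 := by ring
    have e7 : (Q+1)*b = b*Q + b := by ring
    linarith
  · have hk1 : k = b - 1 := by omega
    subst hk1
    have e8 : (Q+2)*(b-1) + (Q+2) = (Q+2)*b := by
      have h9 : b - 1 + 1 = b := by omega
      calc (Q+2)*(b-1) + (Q+2) = (Q+2)*((b-1)+1) := by ring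
        _ = (Q+2)*b := by rw [h9]
    have e5 : (Q+2)*b = b*(Q+2) := Nat.mul_comm _ _
    have hrQ : r ≤ Q := by linarith
    have e9 : b - 1 + 1 = b := by omega
    linarith

variable (p α β : ℕ)

abbrev R : Type := ZMod (p ^ β)
abbrev A : Type := ZMod (p ^ α)
abbrev S : Type := AddMonoidAlgebra (R p β) (A p α)

noncomputable def sg : S p α β := AddMonoidAlgebra.single (1 : A p α) 1
noncomputable def Y : S p α β := sg p α β - 1
noncomputable def U : S p α β := AddMonoidAlgebra.single ((p ^ (α - 1) : ℕ) : A p α) 1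
noncomputable def Z : S p α β := U p α β - 1
noncomputable def w : S p α β :=
  -(∑ i ∈ range (p - 1), ((p.choose (1 + i) / p : ℕ) : S p α β) * (Z p α β) ^ i)
noncomputable def hh : S p α β :=
  ∑ i ∈ range (p ^ (α - 1) - 1),
    (((p ^ (α - 1)).choose (1 + i) / p : ℕ) : S p α β) * (Y p α β) ^ i

lemma sg_pow (m : ℕ) : (sg p α β) ^ m = AddMonoidAlgebra.single ((m : ℕ) : A p α) 1 := by
  rw [sg, AddMonoidAlgebra.single_pow, one_pow, nsmul_eq_mul, mul_one]

lemma U_def : U p α β = (sg p α β) ^ (p ^ (α - 1)) := by rw [sg_pow, U]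

lemma p_pow_S {m : ℕ} (hm : β ≤ m) : ((p : S p α β)) ^ m = 0 := by
  have h1 : ((p ^ m : ℕ) : R p β) = 0 := by
    rw [ZMod.natCast_eq_zero_iff]
    exact pow_dvd_pow p hm
  have h2 : ((p ^ m : ℕ) : S p α β) = 0 := by
    rw [← map_natCast (algebraMap (R p β) (S p α β)) (p ^ m), h1, map_zero]
  simpa using h2

lemma U_pow_p (hα : 1 ≤ α) : (U p α β) ^ p = 1 := by
  rw [U_def, ← pow_mul, ← pow_succ, Nat.sub_add_cancel hα, sg_pow,
    ZMod.natCast_self, AddMonoidAlgebra.one_def]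

lemma Z_pow_p (hp : p.Prime) (hα : 1 ≤ α) :
    (Z p α β) ^ p = (p : S p α β) * Z p α β * w p α β := by
  have hZ1 : (Z p α β + 1) ^ p = 1 := by
    rw [Z, sub_add_cancel, U_pow_p p α β hα]
  set Zv := Z p α β with hZv
  have hsum : ∑ m ∈ range (p + 1), Zv ^ m * (p.choose m : S p α β) = 1 := by
    have := add_pow Zv 1 p
    simp only [one_pow, mul_one] at this
    rw [← this, hZ1]
  rw [Finset.sum_range_succ] at hsum
  have hsplit : ∑ x ∈ range p, Zv ^ x * (p.choose x : S p α β)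
      = (∑ i ∈ range (p - 1), Zv ^ (1 + i) * (p.choose (1 + i) : S p α β)) + 1 := by
    rw [Finset.range_eq_Ico, Finset.sum_eq_sum_Ico_succ_bot hp.pos, Finset.sum_Ico_eq_sum_range]
    simp [add_comm]
  rw [hsplit] at hsum
  simp only [Nat.choose_self, Nat.cast_one, mul_one] at hsum
  have hw : (p : S p α β) * Zv * w p α β
      = -∑ i ∈ range (p - 1), Zv ^ (1 + i) * (p.choose (1 + i) : S p α β) := by
    rw [w, mul_neg, neg_inj, Finset.mul_sum]
    refine Finset.sum_congr rfl fun i hi => ?_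
    have hlt : 1 + i < p := by have := Finset.mem_range.mp hi; omega
    have hdvd : p ∣ p.choose (1 + i) := hp.dvd_choose_self (by omega) hlt
    rw [show ((p.choose (1 + i) : ℕ) : S p α β)
        = (p : S p α β) * ((p.choose (1 + i) / p : ℕ) : S p α β) by
      rw [← Nat.cast_mul, Nat.mul_div_cancel' hdvd]]
    ring
  rw [hw]
  linear_combination hsum

lemma Z_pow_lin (hp : p.Prime) (hα : 1 ≤ α) (k : ℕ) :
    (Z p α β) ^ (1 + (p - 1) * k) = ((p : S p α β) * w p α β) ^ k * Z p α β := by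
  induction k with
  | zero => simp
  | succ k ih =>
    have hp2 := hp.two_le
    have hpe : 1 + (p - 1) * (k + 1) = (1 + (p - 1) * k) + (p - 1) := by ring
    calc (Z p α β) ^ (1 + (p - 1) * (k + 1))
        = (Z p α β) ^ (1 + (p - 1) * k) * (Z p α β) ^ (p - 1) := by rw [hpe, pow_add]
      _ = ((p : S p α β) * w p α β) ^ k * (Z p α β * (Z p α β) ^ (p - 1)) := by
          rw [ih]; ring
      _ = ((p : S p α β) * w p α β) ^ k * (Z p α β) ^ p := by
          rw [show Z p α β * (Z p α β) ^ (p-1) = (Z p α β) ^ p by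
            rw [← pow_succ']
            congr 1
            omega]
      _ = ((p : S p α β) * w p α β) ^ (k + 1) * Z p α β := by
          rw [Z_pow_p p α β hp hα, pow_succ]; ring

lemma Y_pow_q (hp : p.Prime) (hα : 1 ≤ α) :
    (Y p α β) ^ (p ^ (α - 1)) = Z p α β - (p : S p α β) * Y p α β * hh p α β := by
  have hq : 1 ≤ p ^ (α - 1) := Nat.pow_pos hp.pos
  set q := p ^ (α - 1) with hqd
  have hY1 : (Y p α β + 1) ^ q = Z p α β + 1 := by
    rw [Y, sub_add_cancel, ← U_def, Z, sub_add_cancel]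
  set Yv := Y p α β with hYv
  have hsum : ∑ m ∈ range (q + 1), Yv ^ m * (q.choose m : S p α β) = Z p α β + 1 := by
    have := add_pow Yv 1 q
    simp only [one_pow, mul_one] at this
    rw [← this, hY1]
  rw [Finset.sum_range_succ] at hsum
  have hsplit : ∑ x ∈ range q, Yv ^ x * (q.choose x : S p α β)
      = (∑ i ∈ range (q - 1), Yv ^ (1 + i) * (q.choose (1 + i) : S p α β)) + 1 := by
    rw [Finset.range_eq_Ico, Finset.sum_eq_sum_Ico_succ_bot hq, Finset.sum_Ico_eq_sum_range]
    simp [add_comm]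
  rw [hsplit] at hsum
  simp only [Nat.choose_self, Nat.cast_one, mul_one] at hsum
  have hw : (p : S p α β) * Yv * hh p α β
      = ∑ i ∈ range (q - 1), Yv ^ (1 + i) * (q.choose (1 + i) : S p α β) := by
    rw [hh, Finset.mul_sum]
    refine Finset.sum_congr rfl fun i hi => ?_
    have hlt : 1 + i < q := by have := Finset.mem_range.mp hi; omega
    have hdvd : p ∣ q.choose (1 + i) := hp.dvd_choose_pow (by omega) (by omega)
    rw [show ((q.choose (1 + i) : ℕ) : S p α β)
        = (p : S p α β) * ((q.choose (1 + i) / p : ℕ) : S p α β) by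
      rw [← Nat.cast_mul, Nat.mul_div_cancel' hdvd]]
    ring
  rw [hw]
  linear_combination hsum

lemma Y_pow_N (hp : p.Prime) (hα : 1 ≤ α) (hβ : 1 ≤ β) :
    (Y p α β) ^ ((β * (p - 1) + 1) * p ^ (α - 1)) = 0 := by
  set M := β * (p - 1) + 1 with hM
  have hMβ : β ≤ M := by
    have : β * 1 ≤ β * (p - 1) := Nat.mul_le_mul_left β (by have := hp.two_le; omega)
    omega
  rw [mul_comm, pow_mul, Y_pow_q p α β hp hα]
  rw [sub_eq_add_neg, add_pow]
  apply Finset.sum_eq_zero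
  intro j hj
  have hjM : j ≤ M := by have := Finset.mem_range.mp hj; omega
  rcases Nat.eq_zero_or_pos j with hj0 | hj1
  · subst hj0
    have : (-((p : S p α β) * Y p α β * hh p α β)) ^ M
        = (p : S p α β) ^ M * (-(Y p α β * hh p α β)) ^ M := by
      rw [← mul_pow]; ring_nf
    simp only [pow_zero, one_mul, Nat.sub_zero, Nat.choose_zero_right, Nat.cast_one, mul_one]
    rw [this, p_pow_S p α β hMβ, zero_mul]
  · -- j ≥ 1
    set k := (j - 1) / (p - 1) with hk
    set r := (j - 1) % (p - 1) with hr
    have hp1 : 1 ≤ p - 1 := by have := hp.two_le; omega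
    have hkr : j - 1 = (p - 1) * k + r := (Nat.div_add_mod (j - 1) (p - 1)).symm
    have hrlt : r < p - 1 := Nat.mod_lt _ hp1
    have hje : j = (1 + (p - 1) * k) + r := by omega
    have hβk : β ≤ k + (M - j) := by
      have harith : β + ((p - 1) * k + r) ≤ β * (p - 1) + k := by
        have hQ : p - 1 = (p - 2) + 1 := by have := hp.two_le; omega
        rw [hQ]
        apply ar1
        · omega
        · rw [← hQ]; omega
      omega
    have hZj : (Z p α β) ^ j
        = (p : S p α β) ^ k * (w p α β ^ k * ((Z p α β) ^ (1 + r))) := by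
      rw [hje, pow_add, Z_pow_lin p α β hp hα k, mul_pow, pow_add, pow_one]
      ring
    have hneg : (-((p : S p α β) * Y p α β * hh p α β)) ^ (M - j)
        = (p : S p α β) ^ (M - j) * (-(Y p α β * hh p α β)) ^ (M - j) := by
      rw [← mul_pow]; ring_nf
    have hzero : (p : S p α β) ^ k * (p : S p α β) ^ (M - j) = 0 := by
      rw [← pow_add]; exact p_pow_S p α β (by omega)
    rw [hZj, hneg]
    linear_combination (w p α β ^ k * (Z p α β) ^ (1 + r) * (-(Y p α β * hh p α β)) ^ (M - j)
      * ((M.choose j : ℕ) : S p α β)) * hzero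

-- expansion of (single x 1 - 1)^n as a sum of singles
lemma sub_one_pow_expand (x : A p α) (n : ℕ) :
    (AddMonoidAlgebra.single x (1 : R p β) - 1) ^ n
      = ∑ i ∈ range (n + 1),
          AddMonoidAlgebra.single ((i : ℕ) • x)
            (((-1 : R p β)) ^ (n - i) * (n.choose i : R p β)) := by
  rw [sub_eq_add_neg, add_pow]
  refine Finset.sum_congr rfl fun i hi => ?_
  have h1 : (AddMonoidAlgebra.single x (1 : R p β)) ^ i
      = AddMonoidAlgebra.single ((i : ℕ) • x) (1 : R p β) := by
    rw [AddMonoidAlgebra.single_pow, one_pow]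
  have h2 : (-1 : S p α β) = AddMonoidAlgebra.single (0 : A p α) (-1 : R p β) := by
    rw [AddMonoidAlgebra.one_def]
    exact (AddMonoidAlgebra.single_neg (0 : A p α) (1 : R p β)).symm
  have h3 : ((n.choose i : ℕ) : S p α β)
      = AddMonoidAlgebra.single (0 : A p α) ((n.choose i : ℕ) : R p β) :=
    AddMonoidAlgebra.natCast_def _
  rw [h1, h2, h3, AddMonoidAlgebra.single_pow, AddMonoidAlgebra.single_mul_single,
    AddMonoidAlgebra.single_mul_single]
  simp

lemma c0_ne_zero (hp : p.Prime) (hα : 1 ≤ α) (hβ : 1 ≤ β) :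
    (p : S p α β) ^ (β - 1) * ((Z p α β) ^ (p - 1) * (Y p α β) ^ (p ^ (α - 1) - 1)) ≠ 0 := by
  have hp2 := hp.two_le
  set q := p ^ (α - 1) with hq
  have hq1 : 1 ≤ q := Nat.one_le_pow _ _ hp.pos
  have hqp : q * p = p ^ α := by
    rw [hq, ← pow_succ, Nat.sub_add_cancel hα]
  have hpα1 : 1 ≤ p ^ α := Nat.one_le_pow _ _ hp.pos
  -- the target point
  set a₀ : A p α := ((p ^ α - 1 : ℕ) : A p α) with ha₀
  -- numeric identity
  have e0 : (p - 1) * q + (q - 1) = p ^ α - 1 := by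
    have e1 : (p - 1 + 1) * q = (p - 1) * q + q := by ring
    have e2 : p - 1 + 1 = p := by omega
    rw [e2] at e1
    have e3 : p * q = q * p := Nat.mul_comm _ _
    omega
  -- expansions
  have hZe := sub_one_pow_expand p α β ((q : ℕ) : A p α) (p - 1)
  have hYe := sub_one_pow_expand p α β (1 : A p α) (q - 1)
  have ep : p - 1 + 1 = p := by omega
  have eq' : q - 1 + 1 = q := by omega
  rw [ep] at hZe
  rw [eq'] at hYe
  have hZZ : (Z p α β) ^ (p - 1)
      = ∑ i ∈ range p, AddMonoidAlgebra.single ((i : ℕ) • ((q : ℕ) : A p α))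
          (((-1 : R p β)) ^ (p - 1 - i) * ((p-1).choose i : R p β)) := by
    rw [Z, U, ← hq, hZe]
  have hYY : (Y p α β) ^ (q - 1)
      = ∑ k ∈ range q, AddMonoidAlgebra.single ((k : ℕ) • (1 : A p α))
          (((-1 : R p β)) ^ (q - 1 - k) * ((q-1).choose k : R p β)) := by
    rw [Y, sg, hYe]
  -- the product as double sum of singles
  have hprod : (Z p α β) ^ (p - 1) * (Y p α β) ^ (q - 1)
      = ∑ i ∈ range p, ∑ k ∈ range q,
          AddMonoidAlgebra.single (((i * q + k : ℕ)) : A p α)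
            ((((-1 : R p β)) ^ (p - 1 - i) * ((p-1).choose i : R p β))
              * (((-1 : R p β)) ^ (q - 1 - k) * ((q-1).choose k : R p β))) := by
    rw [hZZ, hYY, Finset.sum_mul_sum]
    refine Finset.sum_congr rfl fun i _ => Finset.sum_congr rfl fun k _ => ?_
    rw [AddMonoidAlgebra.single_mul_single]
    congr 1
    push_cast [nsmul_eq_mul]
    ring
  -- rewrite the p-power as a single at 0
  have hpow : (p : S p α β) ^ (β - 1)
      = AddMonoidAlgebra.single (0 : A p α) (((p ^ (β - 1) : ℕ)) : R p β) := by
    rw [show ((p : S p α β)) ^ (β - 1) = ((p ^ (β-1) : ℕ) : S p α β) by push_cast; ring,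
      AddMonoidAlgebra.natCast_def]
  -- evaluate at a₀
  intro hzero
  have heval : ((p : S p α β) ^ (β - 1) * ((Z p α β) ^ (p - 1) * (Y p α β) ^ (q - 1))).coeff a₀
      = ((p ^ (β - 1) : ℕ) : R p β) := by
    rw [hpow, hprod, AddMonoidAlgebra.coeff_single_zero_mul]
    rw [AddMonoidAlgebra.coeff_sum, Finset.sum_apply']
    rw [Finset.sum_eq_single (p - 1)]
    · rw [AddMonoidAlgebra.coeff_sum, Finset.sum_apply']
      rw [Finset.sum_eq_single (q - 1)]
      · rw [AddMonoidAlgebra.coeff_single_apply, if_pos]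
        · simp [Nat.sub_self]
        · rw [e0]
      · intro k hk hkne
        rw [AddMonoidAlgebra.coeff_single_apply, if_neg]
        intro hcast
        have hklt : k < q := Finset.mem_range.mp hk
        have hlt : (p - 1) * q + k < p ^ α := by omega
        have heqn : (p - 1) * q + k = p ^ α - 1 := by
          have := (ZMod.natCast_eq_natCast_iff _ _ _).mp hcast
          have h2 := this.eq_of_lt_of_lt hlt (by omega)
          exact h2
        omega
      · intro hnot
        exact absurd (Finset.mem_range.mpr (by omega)) hnot
    · intro i hi hine
      rw [AddMonoidAlgebra.coeff_sum, Finset.sum_apply']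
      apply Finset.sum_eq_zero
      intro k hk
      rw [AddMonoidAlgebra.coeff_single_apply, if_neg]
      intro hcast
      have hilt : i < p := Finset.mem_range.mp hi
      have hklt : k < q := Finset.mem_range.mp hk
      have hile : i * q ≤ (p - 2) * q := Nat.mul_le_mul_right q (by omega)
      have e4 : (p - 2) * q + q = (p - 1) * q := by
        have e5 : p - 2 + 1 = p - 1 := by omega
        calc (p - 2) * q + q = ((p - 2) + 1) * q := by ring
          _ = (p - 1) * q := by rw [e5]
      have hlt : i * q + k < p ^ α - 1 := by omega
      have heqn : i * q + k = p ^ α - 1 := by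
        have h6 := (ZMod.natCast_eq_natCast_iff _ _ _).mp hcast
        exact h6.eq_of_lt_of_lt (by omega) (by omega)
      omega
    · intro hnot
      exact absurd (Finset.mem_range.mpr (by omega)) hnot
  rw [hzero] at heval
  have : ((p ^ (β - 1) : ℕ) : R p β) ≠ 0 := by
    rw [Ne, ZMod.natCast_eq_zero_iff]
    rw [Nat.pow_dvd_pow_iff_le_right hp.one_lt]
    omega
  exact this (by simpa using heval.symm)


lemma w_isUnit (hp : p.Prime) (hα : 1 ≤ α) (hβ : 1 ≤ β) : IsUnit (w p α β) := by
  have hp2 := hp.two_le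
  have hZnil : IsNilpotent (Z p α β) := by
    refine ⟨1 + (p - 1) * β, ?_⟩
    rw [Z_pow_lin p α β hp hα, mul_pow, p_pow_S p α β le_rfl, zero_mul, zero_mul]
  have hsplit : w p α β = -1 +
      (-(∑ i ∈ Finset.range (p - 2),
        ((p.choose (1 + (i + 1)) / p : ℕ) : S p α β) * (Z p α β) ^ (i + 1))) := by
    rw [w]
    have hr : p - 1 = (p - 2) + 1 := by omega
    rw [hr, Finset.sum_range_succ']
    have h0 : ((p.choose (1 + 0) / p : ℕ) : S p α β) * (Z p α β) ^ 0 = 1 := by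
      norm_num [Nat.choose_one_right, Nat.div_self hp.pos]
    rw [h0]
    ring
  rw [hsplit]
  have hnil : IsNilpotent (-(∑ i ∈ Finset.range (p - 2),
      ((p.choose (1 + (i + 1)) / p : ℕ) : S p α β) * (Z p α β) ^ (i + 1))) := by
    apply IsNilpotent.neg
    apply isNilpotent_sum
    intro i _
    exact (Commute.all _ _).isNilpotent_mul_left
      (by
        rw [pow_succ]
        exact (Commute.all _ _).isNilpotent_mul_left hZnil)
  exact hnil.isUnit_add_left_of_commute (isUnit_one.neg) (Commute.all _ _)

lemma Y_pow_pred (hp : p.Prime) (hα : 1 ≤ α) (hβ : 1 ≤ β) :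
    ∃ u : S p α β, IsUnit u ∧
      (Y p α β) ^ ((β * (p - 1) + 1) * p ^ (α - 1) - 1)
        = u * ((p : S p α β) ^ (β - 1)
            * ((Z p α β) ^ (p - 1) * (Y p α β) ^ (p ^ (α - 1) - 1))) := by
  have hp2 := hp.two_le
  set q := p ^ (α - 1) with hq
  have hq1 : 1 ≤ q := Nat.one_le_pow _ _ hp.pos
  set M := β * (p - 1) + 1 with hM
  have hM2 : 2 ≤ M := by
    have h1 : 1 * 1 ≤ β * (p - 1) := Nat.mul_le_mul hβ (by omega)
    omega
  have hMβ : β ≤ M - 1 := by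
    have h1 : β * 1 ≤ β * (p - 1) := Nat.mul_le_mul_left β (by omega)
    omega
  have hexp : M * q - 1 = q * (M - 1) + (q - 1) := by
    have e1 : M * q = (M - 1) * q + q := by
      have e2 : (M - 1) + 1 = M := by omega
      calc M * q = ((M - 1) + 1) * q := by rw [e2]
        _ = (M - 1) * q + q := by ring
    have e3 : (M - 1) * q = q * (M - 1) := Nat.mul_comm _ _
    omega
  have hYsplit : (Y p α β) ^ (M * q - 1)
      = ((Y p α β) ^ q) ^ (M - 1) * (Y p α β) ^ (q - 1) := by
    rw [hexp, pow_add, pow_mul]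
  have hwu := w_isUnit p α β hp hα hβ
  have hYqM := Y_pow_q p α β hp hα
  rcases eq_or_ne p 2 with hp2' | hpodd
  · -- p = 2
    subst hp2'
    have hw2 : w 2 α β = -1 := by
      rw [w]
      norm_num
    have hM1 : M - 1 = β := by omega
    have hstep : ((Y 2 α β) ^ q) ^ (M - 1)
        = ∑ j ∈ Finset.range (M - 1),
            (((2 : ℕ) : S 2 α β) * w 2 α β) ^ j * Z 2 α β
              * (-(((2 : ℕ) : S 2 α β) * Y 2 α β * hh 2 α β)) ^ (M - 2 - j)
              * ((M - 1).choose (j + 1) : S 2 α β) := by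
      rw [hYqM, sub_eq_add_neg, add_pow]
      have hr : (M - 1) + 1 = M := by omega
      rw [show Finset.range ((M-1)+1) = Finset.range ((M-1)+1) from rfl]
      rw [Finset.sum_range_succ']
      have hzero0 : (Z 2 α β) ^ 0 * (-(((2:ℕ) : S 2 α β) * Y 2 α β * hh 2 α β)) ^ ((M-1) - 0)
          * (((M-1).choose 0 : ℕ) : S 2 α β) = 0 := by
        have hneg : (-(((2:ℕ) : S 2 α β) * Y 2 α β * hh 2 α β)) ^ (M - 1)
            = ((2:ℕ) : S 2 α β) ^ (M - 1) * (-(Y 2 α β * hh 2 α β)) ^ (M - 1) := by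
          rw [← mul_pow]; ring_nf
        rw [Nat.sub_zero, hneg, p_pow_S 2 α β (by omega)]
        ring
      rw [hzero0, add_zero]
      refine Finset.sum_congr rfl fun j hj => ?_
      have hZj : (Z 2 α β) ^ (j + 1) = (((2:ℕ) : S 2 α β) * w 2 α β) ^ j * Z 2 α β := by
        have := Z_pow_lin 2 α β hp hα j
        rw [show 1 + (2 - 1) * j = j + 1 by omega] at this
        exact this
      rw [hZj]
      have hsub : M - 1 - (j + 1) = M - 2 - j := by omega
      rw [hsub]
    have hterm : ∀ j ∈ Finset.range (M - 1),
        (((2 : ℕ) : S 2 α β) * w 2 α β) ^ j * Z 2 α β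
            * (-(((2 : ℕ) : S 2 α β) * Y 2 α β * hh 2 α β)) ^ (M - 2 - j)
            * ((M - 1).choose (j + 1) : S 2 α β) * (Y 2 α β) ^ (q - 1)
          = (w 2 α β ^ j * (-(Y 2 α β * hh 2 α β)) ^ (M - 2 - j)
              * ((M - 1).choose (j + 1) : S 2 α β))
            * (((2 : ℕ) : S 2 α β) ^ (β - 1)
              * ((Z 2 α β) ^ (2 - 1) * (Y 2 α β) ^ (q - 1))) := by
      intro j hj
      have hjlt : j < M - 1 := Finset.mem_range.mp hj
      have hpow2 : ((2:ℕ) : S 2 α β) ^ j * ((2:ℕ) : S 2 α β) ^ (M - 2 - j)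
          = ((2:ℕ) : S 2 α β) ^ (β - 1) := by
        rw [← pow_add]; congr 1; omega
      have hneg : (-(((2:ℕ) : S 2 α β) * Y 2 α β * hh 2 α β)) ^ (M - 2 - j)
          = ((2:ℕ) : S 2 α β) ^ (M - 2 - j) * (-(Y 2 α β * hh 2 α β)) ^ (M - 2 - j) := by
        rw [← mul_pow]; ring_nf
      rw [hneg, mul_pow, pow_one]
      linear_combination (w 2 α β ^ j * Z 2 α β * (-(Y 2 α β * hh 2 α β)) ^ (M - 2 - j)
        * (((M - 1).choose (j + 1) : ℕ) : S 2 α β) * (Y 2 α β) ^ (q - 1)) * hpow2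
    refine ⟨∑ j ∈ Finset.range (M - 1),
      w 2 α β ^ j * (-(Y 2 α β * hh 2 α β)) ^ (M - 2 - j)
        * ((M - 1).choose (j + 1) : S 2 α β), ?_, ?_⟩
    · -- unit
      have hYnil : IsNilpotent (Y 2 α β) := ⟨M * q, by
        have := Y_pow_N 2 α β hp hα hβ
        rw [← hM, ← hq] at this
        exact this⟩
      have hr2 : M - 1 = (M - 2) + 1 := by omega
      have hrange : Finset.range (M - 1) = Finset.range ((M - 2) + 1) := by rw [← hr2]
      rw [hrange, Finset.sum_range_succ]
      have htop : w 2 α β ^ (M - 2) * (-(Y 2 α β * hh 2 α β)) ^ (M - 2 - (M - 2))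
          * ((M - 1).choose ((M - 2) + 1) : S 2 α β) = w 2 α β ^ (M - 2) := by
        rw [Nat.sub_self, pow_zero, show (M - 2) + 1 = M - 1 by omega, Nat.choose_self]
        norm_num
      rw [htop, add_comm]
      apply IsNilpotent.isUnit_add_left_of_commute _ (hwu.pow _) (Commute.all _ _)
      apply isNilpotent_sum
      intro j hj
      have hjlt : j < M - 2 := Finset.mem_range.mp hj
      have hne : M - 2 - j = (M - 3 - j) + 1 := by omega
      apply (Commute.all _ _).isNilpotent_mul_right
      apply (Commute.all _ _).isNilpotent_mul_left
      rw [hne, pow_succ]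
      exact (Commute.all _ _).isNilpotent_mul_left
        (((Commute.all _ _).isNilpotent_mul_right hYnil).neg)
    · rw [hYsplit, hstep, Finset.sum_mul, Finset.sum_mul]
      rw [Finset.sum_congr rfl hterm, ← Finset.sum_mul]
  · -- p odd
    have hp3 : 3 ≤ p := by omega
    have hstep : ((Y p α β) ^ q) ^ (M - 1) = (Z p α β) ^ (M - 1) := by
      rw [hYqM, sub_eq_add_neg, add_pow]
      rw [Finset.sum_eq_single (M - 1)]
      · simp
      · intro j hj hjne
        have hjle : j ≤ M - 2 := by have := Finset.mem_range.mp hj; omega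
        rcases Nat.eq_zero_or_pos j with rfl | hj1
        · have hneg : (-((p : S p α β) * Y p α β * hh p α β)) ^ (M - 1 - 0)
              = (p : S p α β) ^ (M - 1) * (-(Y p α β * hh p α β)) ^ (M - 1) := by
            rw [Nat.sub_zero, ← mul_pow]; ring_nf
          rw [hneg, p_pow_S p α β hMβ]
          ring
        · set k := (j - 1) / (p - 1) with hk
          set r := (j - 1) % (p - 1) with hr
          have hp1 : 1 ≤ p - 1 := by omega
          have hkr : j - 1 = (p - 1) * k + r := (Nat.div_add_mod (j - 1) (p - 1)).symm
          have hrlt : r < p - 1 := Nat.mod_lt _ hp1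
          have hje : j = (1 + (p - 1) * k) + r := by omega
          have hβk : β ≤ k + (M - 1 - j) := by
            have harith : β + (1 + ((p - 1) * k + r)) ≤ β * (p - 1) + k := by
              have hQ : p - 1 = (p - 3) + 2 := by omega
              rw [hQ]
              apply ar2
              · omega
              · rw [← hQ]; omega
            omega
          have hZj : (Z p α β) ^ j
              = (p : S p α β) ^ k * (w p α β ^ k * ((Z p α β) ^ (1 + r))) := by
            rw [hje, pow_add, Z_pow_lin p α β hp hα k, mul_pow, pow_add, pow_one]
            ring
          have hneg : (-((p : S p α β) * Y p α β * hh p α β)) ^ (M - 1 - j)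
              = (p : S p α β) ^ (M - 1 - j) * (-(Y p α β * hh p α β)) ^ (M - 1 - j) := by
            rw [← mul_pow]; ring_nf
          have hzero : (p : S p α β) ^ k * (p : S p α β) ^ (M - 1 - j) = 0 := by
            rw [← pow_add]; exact p_pow_S p α β (by omega)
          rw [hZj, hneg]
          linear_combination (w p α β ^ k * (Z p α β) ^ (1 + r)
            * (-(Y p α β * hh p α β)) ^ (M - 1 - j)
            * (((M - 1).choose j : ℕ) : S p α β)) * hzero
      · intro hnot
        exact absurd (Finset.mem_range.mpr (by omega)) hnot
    have hZM1 : (Z p α β) ^ (M - 1)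
        = w p α β ^ (β - 1) * ((p : S p α β) ^ (β - 1) * (Z p α β) ^ (p - 1)) := by
      have he : M - 1 = (1 + (p - 1) * (β - 1)) + (p - 2) := by
        have e1 : (p - 1) * (β - 1) + (p - 1) = (p - 1) * β := by
          have e2 : (β - 1) + 1 = β := by omega
          calc (p - 1) * (β - 1) + (p - 1) = (p - 1) * ((β - 1) + 1) := by ring
            _ = (p - 1) * β := by rw [e2]
        have e3 : (p - 1) * β = β * (p - 1) := Nat.mul_comm _ _
        omega
      rw [he, pow_add, Z_pow_lin p α β hp hα, mul_pow]
      have hzz : Z p α β * (Z p α β) ^ (p - 2) = (Z p α β) ^ (p - 1) := by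
        rw [← pow_succ']; congr 1; omega
      linear_combination ((p : S p α β) ^ (β - 1) * w p α β ^ (β - 1)) * hzz
    exact ⟨w p α β ^ (β - 1), hwu.pow _, by rw [hYsplit, hstep, hZM1]; ring⟩

noncomputable def T : Multiplicative (A p α) →* Module.End (R p β) (A p α → R p β) where
  toFun a :=
    { toFun := fun f x => f (x + Multiplicative.toAdd a)
      map_add' := fun f g => rfl
      map_smul' := fun r f => rfl }
  map_one' := LinearMap.ext fun f => funext fun x => by simp
  map_mul' := fun a b => LinearMap.ext fun f => funext fun x => by
    simp [Module.End.mul_apply, add_assoc]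

noncomputable def Phi : S p α β →ₐ[R p β] Module.End (R p β) (A p α → R p β) :=
  AddMonoidAlgebra.lift _ _ _ (T p α β)

lemma Phi_single (a : A p α) (r : R p β) (f : A p α → R p β) :
    Phi p α β (AddMonoidAlgebra.single a r) f = fun x => r • f (x + a) := by
  rw [Phi, AddMonoidAlgebra.lift_single]
  rfl

lemma Phi_apply_eval (s : S p α β) (f : A p α → R p β) (x : A p α) :
    Phi p α β s f x = ∑ a ∈ s.coeff.support, s.coeff a • f (x + a) := by
  rw [Phi, AddMonoidAlgebra.lift_apply]
  rw [Finsupp.sum]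
  rw [LinearMap.coe_sum, Finset.sum_apply, Finset.sum_apply]
  rfl

lemma Phi_fdiff (a : A p α) (f : A p α → R p β) :
    fdiff a f = Phi p α β (AddMonoidAlgebra.single a 1 - 1) f := by
  rw [map_sub, map_one, LinearMap.sub_apply, Module.End.one_apply]
  funext x
  rw [Pi.sub_apply, Phi_single]
  simp [fdiff]

lemma foldr_eq (f : A p α → R p β) (l : List (A p α)) :
    l.foldr fdiff f
      = Phi p α β ((l.map (fun a => AddMonoidAlgebra.single a (1 : R p β) - 1)).prod) f := by
  induction l with
  | nil => simp
  | cons a l ih =>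
    rw [List.foldr_cons, ih, List.map_cons, List.prod_cons, map_mul, Module.End.mul_apply,
      Phi_fdiff]

lemma delta_eval (s : S p α β) (b : A p α) :
    Phi p α β s (fun y => if y = b then (1 : R p β) else 0) 0 = s.coeff b := by
  rw [Phi_apply_eval]
  have : ∀ a ∈ s.coeff.support, (s.coeff a • if ((0 : A p α) + a) = b then (1 : R p β) else 0)
      = if a = b then s.coeff a else 0 := by
    intro a _
    rw [zero_add]
    by_cases h : a = b <;> simp [h]
  rw [Finset.sum_congr rfl this, Finset.sum_ite_eq' s.coeff.support b (fun a => s.coeff a)]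
  by_cases hb : b ∈ s.coeff.support
  · rw [if_pos hb]
  · rw [if_neg hb]
    exact (Finsupp.notMem_support_iff.mp hb).symm

lemma exists_fn (s : S p α β) (hs : s ≠ 0) :
    ∃ (f : A p α → R p β) (x : A p α), Phi p α β s f x ≠ 0 := by
  obtain ⟨b, hb⟩ : ∃ b, s.coeff b ≠ 0 := by
    by_contra hc
    push_neg at hc
    exact hs (AddMonoidAlgebra.ext (Finsupp.ext hc))
  exact ⟨fun y => if y = b then 1 else 0, 0, by rw [delta_eval]; exact hb⟩

lemma aug_single (a : A p α) (r : R p β) :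
    aug (R p β) (A p α) (AddMonoidAlgebra.single a r) = r := by
  rw [aug, AddMonoidAlgebra.lift_single]
  simp

lemma mem_augIdeal_iff (x : S p α β) :
    x ∈ augIdeal (R p β) (A p α) ↔ aug (R p β) (A p α) x = 0 := by
  rw [augIdeal, RingHom.mem_ker]
  rfl

lemma Y_mem : Y p α β ∈ augIdeal (R p β) (A p α) := by
  rw [mem_augIdeal_iff, Y, sg, map_sub, map_one, aug_single, sub_self]

lemma single_sub_one_mem_span (hp : p.Prime) (a : A p α) :
    AddMonoidAlgebra.single a (1 : R p β) - 1 ∈ Ideal.span {Y p α β} := by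
  haveI : NeZero (p ^ α) := ⟨(pow_pos hp.pos α).ne'⟩
  have ha : AddMonoidAlgebra.single a (1 : R p β) = (sg p α β) ^ (ZMod.val a) := by
    rw [sg_pow, ZMod.natCast_rightInverse a]
  rw [ha, Ideal.mem_span_singleton']
  exact ⟨∑ i ∈ range (ZMod.val a), (sg p α β) ^ i, by rw [Y]; exact geom_sum_mul _ _⟩

lemma augIdeal_eq_span (hp : p.Prime) :
    augIdeal (R p β) (A p α) = Ideal.span {Y p α β} := by
  apply le_antisymm
  · intro x hx
    rw [mem_augIdeal_iff] at hx
    have haug : ∑ a ∈ x.coeff.support, x.coeff a = aug (R p β) (A p α) x := by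
      conv_rhs => rw [← AddMonoidAlgebra.sum_coeff_single x]
      rw [Finsupp.sum, map_sum]
      exact Finset.sum_congr rfl fun a _ => (aug_single p α β a (x.coeff a)).symm
    have h1 : ∑ a ∈ x.coeff.support, (x.coeff a) • (AddMonoidAlgebra.single a (1 : R p β) - 1)
        = (∑ a ∈ x.coeff.support, AddMonoidAlgebra.single a (x.coeff a))
          - (∑ a ∈ x.coeff.support, x.coeff a) • (1 : S p α β) := by
      rw [Finset.sum_smul, ← Finset.sum_sub_distrib]
      refine Finset.sum_congr rfl fun a _ => ?_
      rw [smul_sub]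
      congr 1
      rw [AddMonoidAlgebra.smul_single', mul_one]
    have h2 : x = ∑ a ∈ x.coeff.support, (x.coeff a) • (AddMonoidAlgebra.single a (1 : R p β) - 1) := by
      rw [h1, haug, hx, zero_smul, sub_zero]
      conv_lhs => rw [← AddMonoidAlgebra.sum_coeff_single x]
      rfl
    rw [h2]
    apply Ideal.sum_mem
    intro a _
    rw [Algebra.smul_def]
    exact Ideal.mul_mem_left _ _ (single_sub_one_mem_span p α β hp a)
  · rw [Ideal.span_le, Set.singleton_subset_iff]
    exact Y_mem p α β


lemma prod_mem (l : List (A p α)) :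
    (l.map (fun a => AddMonoidAlgebra.single a (1 : R p β) - 1)).prod
      ∈ (augIdeal (R p β) (A p α)) ^ l.length := by
  induction l with
  | nil => simp
  | cons a l ih =>
    rw [List.map_cons, List.prod_cons, List.length_cons, pow_succ']
    refine Ideal.mul_mem_mul ?_ ih
    rw [mem_augIdeal_iff, map_sub, map_one, aug_single, sub_self]

lemma N_two (hp : p.Prime) (hα : 1 ≤ α) (hβ : 1 ≤ β) :
    2 ≤ (β * (p - 1) + 1) * p ^ (α - 1) := by
  have h1 : 1 * 1 ≤ β * (p - 1) := Nat.mul_le_mul hβ (by have := hp.two_le; omega)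
  have h2 : 1 ≤ p ^ (α - 1) := Nat.one_le_pow _ _ hp.pos
  calc 2 = 2 * 1 := by ring
    _ ≤ (β * (p - 1) + 1) * p ^ (α - 1) := Nat.mul_le_mul (by omega) h2

lemma Ipow_bot (hp : p.Prime) (hα : 1 ≤ α) (hβ : 1 ≤ β) :
    (augIdeal (R p β) (A p α)) ^ ((β * (p - 1) + 1) * p ^ (α - 1)) = ⊥ := by
  rw [augIdeal_eq_span p α β hp, Ideal.span_singleton_pow, Y_pow_N p α β hp hα hβ,
    Ideal.span_singleton_eq_bot]

lemma Y_pred_ne (hp : p.Prime) (hα : 1 ≤ α) (hβ : 1 ≤ β) :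
    (Y p α β) ^ ((β * (p - 1) + 1) * p ^ (α - 1) - 1) ≠ 0 := by
  obtain ⟨u, hu, heq⟩ := Y_pow_pred p α β hp hα hβ
  rw [heq]
  intro hcontr
  exact c0_ne_zero p α β hp hα hβ ((hu.mul_right_eq_zero).mp hcontr)

lemma min_bound (hp : p.Prime) (hα : 1 ≤ α) (hβ : 1 ≤ β) (m : ℕ)
    (hm : (augIdeal (R p β) (A p α)) ^ m = ⊥) :
    (β * (p - 1) + 1) * p ^ (α - 1) ≤ m := by
  set N := (β * (p - 1) + 1) * p ^ (α - 1) with hN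
  by_contra hcon
  push_neg at hcon
  have h1 : (Y p α β) ^ (N - 1) ∈ (augIdeal (R p β) (A p α)) ^ (N - 1) := by
    refine Ideal.pow_mem_pow ?_ _
    rw [augIdeal_eq_span p α β hp]
    exact Ideal.mem_span_singleton_self _
  have h2 : (augIdeal (R p β) (A p α)) ^ (N - 1) ≤ (augIdeal (R p β) (A p α)) ^ m :=
    Ideal.pow_le_pow_right (by omega)
  exact Y_pred_ne p α β hp hα hβ (Ideal.mem_bot.mp (hm ▸ h2 h1))

lemma degle_all (hp : p.Prime) (hα : 1 ≤ α) (hβ : 1 ≤ β) (f : A p α → R p β) :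
    DegLE f ((β * (p - 1) + 1) * p ^ (α - 1) - 1) := by
  intro l hl
  rw [foldr_eq]
  have hlen : l.length = (β * (p - 1) + 1) * p ^ (α - 1) := by
    have := N_two p α β hp hα hβ
    omega
  have hmem := prod_mem p α β l
  rw [hlen, Ipow_bot p α β hp hα hβ, Ideal.mem_bot] at hmem
  rw [hmem, map_zero]
  rfl

lemma degle_succ (f : A p α → R p β) (n : ℕ) (h : DegLE f n) : DegLE f (n + 1) := by
  intro l hl
  cases l with
  | nil => simp at hl
  | cons a l' =>
    rw [List.foldr_cons, h l' (by simpa using hl)]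
    funext x
    simp [fdiff]

lemma degle_mono (f : A p α → R p β) {n m : ℕ} (hnm : n ≤ m) (h : DegLE f n) : DegLE f m := by
  induction m with
  | zero => exact Nat.le_zero.mp hnm ▸ h
  | succ m ih =>
    rcases Nat.lt_or_ge n (m + 1) with h1 | h1
    · exact degle_succ p α β f m (ih (by omega))
    · have : n = m + 1 := by omega
      exact this ▸ h

lemma foldr_zero (l : List (A p α)) : l.foldr fdiff (0 : A p α → R p β) = 0 := by
  induction l with
  | nil => rfl
  | cons a l ih =>
    rw [List.foldr_cons, ih]
    funext x
    simp [fdiff]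

lemma exists_max (hp : p.Prime) (hα : 1 ≤ α) (hβ : 1 ≤ β) :
    ∃ f : A p α → R p β,
      fdeg f = ((((β * (p - 1) + 1) * p ^ (α - 1) - 1 : ℕ) : ℕ∞) : WithBot ℕ∞) := by
  set N := (β * (p - 1) + 1) * p ^ (α - 1) with hN
  have hN2 := N_two p α β hp hα hβ
  obtain ⟨f₀, x₀, hf₀⟩ := exists_fn p α β ((Y p α β) ^ (N - 1)) (Y_pred_ne p α β hp hα hβ)
  set l₀ : List (A p α) := List.replicate (N - 1) (1 : A p α) with hl₀
  have hprod : (l₀.map (fun a => AddMonoidAlgebra.single a (1 : R p β) - 1)).prod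
      = (Y p α β) ^ (N - 1) := by
    rw [hl₀, List.map_replicate, List.prod_replicate, Y, sg]
  have hnz : l₀.foldr fdiff f₀ ≠ 0 := by
    rw [foldr_eq, hprod]
    intro hcontr
    exact hf₀ (by rw [hcontr]; rfl)
  have hf₀ne : f₀ ≠ 0 := by
    intro hcontr
    rw [hcontr] at hnz
    exact hnz (foldr_zero p α β l₀)
  have hdeg : DegLE f₀ (N - 1) := degle_all p α β hp hα hβ f₀
  have hmin : ∀ n ∈ {n : ℕ | DegLE f₀ n}, N - 1 ≤ n := by
    intro n hn
    by_contra hlt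
    push_neg at hlt
    have h2 : DegLE f₀ (N - 2) := degle_mono p α β f₀ (by omega) hn
    exact hnz (h2 l₀ (by rw [hl₀, List.length_replicate]; omega))
  refine ⟨f₀, ?_⟩
  rw [fdeg, if_neg hf₀ne, if_pos ⟨N - 1, hdeg⟩]
  have : sInf {n : ℕ | DegLE f₀ n} = N - 1 :=
    le_antisymm (Nat.sInf_le hdeg) (hmin _ (Nat.sInf_mem ⟨N - 1, hdeg⟩))
  rw [this]

end CSAux

/-- For a prime `p` and `α, β ≥ 1`, the nilpotency index of the augmentation ideal of
`(ℤ/p^βℤ)[ℤ/p^αℤ]` equals `(β(p-1)+1)p^{α-1}`; equivalently, the maximal functional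
degree of a map `ℤ/p^αℤ → ℤ/p^βℤ` is `(β(p-1)+1)p^{α-1} - 1`. -/
theorem delta_cyclic_p_groups (p : ℕ) (hp : p.Prime) (α β : ℕ) (hα : 1 ≤ α) (hβ : 1 ≤ β) :
    (augIdeal (ZMod (p ^ β)) (ZMod (p ^ α)) ^ ((β * (p - 1) + 1) * p ^ (α - 1)) = ⊥ ∧
        ∀ m : ℕ, augIdeal (ZMod (p ^ β)) (ZMod (p ^ α)) ^ m = ⊥ →
          (β * (p - 1) + 1) * p ^ (α - 1) ≤ m) ∧
      (⨆ f : ZMod (p ^ α) → ZMod (p ^ β), fdeg f)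
        = ((((β * (p - 1) + 1) * p ^ (α - 1) - 1 : ℕ) : ℕ∞) : WithBot ℕ∞) := by
  have hαβ := And.intro hα hβ
  constructor
  · exact ⟨CSAux.Ipow_bot p α β hp hα hβ, CSAux.min_bound p α β hp hα hβ⟩
  · apply le_antisymm
    · apply iSup_le
      intro f
      rw [fdeg]
      split_ifs with h1 h2
      · exact bot_le
      · have hle : sInf {n : ℕ | DegLE f n} ≤ (β * (p - 1) + 1) * p ^ (α - 1) - 1 :=
          Nat.sInf_le (CSAux.degle_all p α β hp hα hβ f)
        exact WithBot.coe_le_coe.mpr (Nat.cast_le.mpr hle)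
      · exact absurd ⟨(β * (p - 1) + 1) * p ^ (α - 1) - 1, CSAux.degle_all p α β hp hα hβ f⟩ h2
    · obtain ⟨f₀, hf₀⟩ := CSAux.exists_max p α β hp hα hβ
      rw [← hf₀]
      exact le_iSup (fun f => fdeg f) f₀
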